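/- Let S be an essentially epsilon-strongly G-graded ring with E_g a set of local units for S_g S_{g^{-1}}, let N be a normal subgroup of G, and fix a coset C ∈ G/N. Assume that for all g, h ∈ C, e ∈ E_g and f ∈ E_h, the join e ∨ f exists in the idempotent order. Then E_C, the join-closure of the union of the E_g for g ∈ C, is a set of local units for S_C S_{C^{-1}}. -/
import Mathlib


/-- The additive subgroup generated by all products `u * v` with `u ∈ U`, `v ∈ V`. -/
def mulSub {S : Type*} [NonUnitalRing S] (U V : AddSubgroup S) : AddSubgroup S :=
  AddSubgroup.closure (Set.image2 (· * ·) (U : Set S) (V : Set S))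

/-- `comp` is a `G`-grading of the ring `S`: the components form an internal direct sum
and `S_g S_h ⊆ S_{gh}`. -/
def IsGrading {G : Type*} [Group G] [DecidableEq G] {S : Type*} [NonUnitalRing S]
    (comp : G → AddSubgroup S) : Prop :=
  DirectSum.IsInternal comp ∧
    ∀ g h : G, ∀ a ∈ comp g, ∀ b ∈ comp h, a * b ∈ comp (g * h)

/-- The grading `comp` is epsilon-strong: for every `g` there are `ε_g ∈ S_g S_{g⁻¹}` and
`ε'_g ∈ S_{g⁻¹} S_g` with `ε_g s = s = s ε'_g` for all `s ∈ S_g`. -/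
def EpsilonStrong {G : Type*} [Group G] {S : Type*} [NonUnitalRing S]
    (comp : G → AddSubgroup S) : Prop :=
  ∀ g : G, ∃ ε ∈ mulSub (comp g) (comp g⁻¹), ∃ ε' ∈ mulSub (comp g⁻¹) (comp g),
    ∀ s ∈ comp g, ε * s = s ∧ s * ε' = s

/-- The component `S_C = ⊕_{g ∈ C} S_g` of the induced `G/N`-grading. -/
def indComp {G : Type*} [Group G] {S : Type*} [NonUnitalRing S]
    (comp : G → AddSubgroup S) (N : Subgroup G) (C : G ⧸ N) : AddSubgroup S :=
  ⨆ g : {g : G // (g : G ⧸ N) = C}, comp g.1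

/-- The closure of a set `A` under the join operation `a ∨ b = a + b - a*b`. -/
inductive JoinClosure {S : Type*} [NonUnitalRing S] (A : Set S) : S → Prop
  | base {x : S} : x ∈ A → JoinClosure A x
  | join {x y : S} : JoinClosure A x → JoinClosure A y → JoinClosure A (x + y - x * y)

/-- `E` is a set of local units for (the ring with underlying additive group) `T`:
a join-closed set of commuting idempotents contained in `T` such that every element of `T`
has a local unit in `E`. -/
def IsLocalUnitsFor {S : Type*} [NonUnitalRing S] (T : AddSubgroup S) (E : Set S) : Prop :=
  (∀ e ∈ E, e ∈ T) ∧ (∀ e ∈ E, e * e = e) ∧ (∀ e ∈ E, ∀ f ∈ E, e * f = f * e) ∧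
  (∀ e ∈ E, ∀ f ∈ E, e + f - e * f ∈ E) ∧
  (∀ r ∈ T, ∃ f ∈ E, f * r = r ∧ r * f = r)


section Aux
variable {S : Type*} [NonUnitalRing S]

variable {S : Type*} [NonUnitalRing S]

lemma mul_mem_mulSub {U V : AddSubgroup S} {u v : S} (hu : u ∈ U) (hv : v ∈ V) :
    u * v ∈ mulSub U V :=
  AddSubgroup.subset_closure ⟨u, hu, v, hv, rfl⟩

lemma mulSub_le {U V P : AddSubgroup S}
    (h : ∀ u ∈ U, ∀ v ∈ V, u * v ∈ P) : mulSub U V ≤ P := by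
  rw [mulSub, AddSubgroup.closure_le]
  rintro _ ⟨u, hu, v, hv, rfl⟩
  exact h u hu v hv

lemma mulSub_induction {U V : AddSubgroup S} {P : S → Prop} {x : S}
    (hx : x ∈ mulSub U V)
    (mem : ∀ u ∈ U, ∀ v ∈ V, P (u * v)) (zero : P 0)
    (add : ∀ a b, P a → P b → P (a + b)) (neg : ∀ a, P a → P (-a)) : P x := by
  refine AddSubgroup.closure_induction (p := fun x _ => P x) ?_ zero
    (fun a b _ _ ha hb => add a b ha hb) (fun a _ ha => neg a ha) hx
  rintro _ ⟨u, hu, v, hv, rfl⟩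
  exact mem u hu v hv

lemma mulSub_assoc (U V W : AddSubgroup S) :
    mulSub (mulSub U V) W = mulSub U (mulSub V W) := by
  apply le_antisymm
  · refine mulSub_le fun x hx w hw => ?_
    refine mulSub_induction (P := fun x => x * w ∈ mulSub U (mulSub V W)) hx
      (fun u hu v hv => ?_) (by simpa using zero_mem _)
      (fun a b ha hb => by simpa [add_mul] using add_mem ha hb)
      (fun a ha => by simpa [neg_mul] using neg_mem ha)
    show u * v * w ∈ _
    rw [mul_assoc]
    exact mul_mem_mulSub hu (mul_mem_mulSub hv hw)
  · refine mulSub_le fun u hu x hx => ?_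
    refine mulSub_induction (P := fun x => u * x ∈ mulSub (mulSub U V) W) hx
      (fun v hv w hw => ?_) (by simpa using zero_mem _)
      (fun a b ha hb => by simpa [mul_add] using add_mem ha hb)
      (fun a ha => by simpa [mul_neg] using neg_mem ha)
    show u * (v * w) ∈ _
    rw [← mul_assoc]
    exact mul_mem_mulSub (mul_mem_mulSub hu hv) hw

lemma join_comm {e f : S} (hc : e * f = f * e) :
    e + f - e * f = f + e - f * e := by rw [hc]; abel

lemma join_mul_left {e f r : S} (h : f * r = r) : (e + f - e * f) * r = r := by
  have : (e + f - e * f) * r = e * r + f * r - e * (f * r) := by noncomm_ring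
  rw [this, h]; abel

lemma join_mul_right {e f r : S} (h : r * e = r) : r * (e + f - e * f) = r := by
  have : r * (e + f - e * f) = r * e + r * f - (r * e) * f := by noncomm_ring
  rw [this, h]; abel

lemma join_mul_left' {e f r : S} (hc : e * f = f * e) (h : e * r = r) :
    (e + f - e * f) * r = r := by rw [join_comm hc]; exact join_mul_left h

lemma join_mul_right' {e f r : S} (hc : e * f = f * e) (h : r * f = r) :
    r * (e + f - e * f) = r := by rw [join_comm hc]; exact join_mul_right h

lemma comm_join {x y z : S} (h1 : x * y = y * x) (h2 : x * z = z * x) :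
    x * (y + z - y * z) = (y + z - y * z) * x := by
  have h3 : x * (y * z) = (y * z) * x := by
    rw [← mul_assoc, h1, mul_assoc, h2, ← mul_assoc]
  rw [mul_sub, mul_add, sub_mul, add_mul, h1, h2, h3]

lemma JoinClosure.comm {A : Set S} (hA : ∀ x ∈ A, ∀ y ∈ A, x * y = y * x) :
    ∀ x, JoinClosure A x → ∀ y, JoinClosure A y → x * y = y * x := by
  intro x hx
  induction hx with
  | base hx =>
    intro y hy
    induction hy with
    | base hy => exact hA _ hx _ hy
    | join hy hz ihy ihz => exact comm_join ihy ihz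
  | join ha hb iha ihb =>
    intro y hy
    exact (comm_join (iha y hy).symm (ihb y hy).symm).symm

lemma join_idem {a b : S} (ha : a * a = a) (hb : b * b = b) (hc : a * b = b * a) :
    (a + b - a * b) * (a + b - a * b) = a + b - a * b := by
  have h1 : a * (a * b) = a * b := by rw [← mul_assoc, ha]
  have h2 : (a * b) * a = a * b := by rw [mul_assoc, ← hc, ← mul_assoc, ha]
  have h3 : b * (a * b) = a * b := by rw [← mul_assoc, ← hc, mul_assoc, hb]
  have h4 : (a * b) * b = a * b := by rw [mul_assoc, hb]
  have h5 : (a * b) * (a * b) = a * b := by rw [← mul_assoc, h2, mul_assoc, hb]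
  have expand : (a + b - a * b) * (a + b - a * b)
      = a * a + a * b + (b * a + b * b)
        - (a * (a * b) + b * (a * b)) - ((a * b) * a + (a * b) * b) + (a * b) * (a * b) := by
    noncomm_ring
  rw [expand, ha, hb, h1, h2, h3, h4, h5, ← hc]
  abel

lemma JoinClosure.idem {A : Set S} (hA : ∀ x ∈ A, ∀ y ∈ A, x * y = y * x)
    (hid : ∀ x ∈ A, x * x = x) : ∀ x, JoinClosure A x → x * x = x := by
  intro x hx
  induction hx with
  | base h => exact hid _ h
  | @join a b ha hb iha ihb => exact join_idem iha ihb (JoinClosure.comm hA a ha b hb)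

end Aux

lemma indComp_mul {G : Type*} [Group G] {S : Type*} [NonUnitalRing S]
    (comp : G → AddSubgroup S)
    (hgr : ∀ g h : G, ∀ a ∈ comp g, ∀ b ∈ comp h, a * b ∈ comp (g * h))
    (N : Subgroup G) [N.Normal] (C D : G ⧸ N) :
    ∀ a ∈ indComp comp N C, ∀ b ∈ indComp comp N D, a * b ∈ indComp comp N (C * D) := by
  intro a ha
  have ha' : a ∈ ⨆ g : {g : G // (g : G ⧸ N) = C}, comp g.1 := ha
  refine AddSubgroup.iSup_induction
    (C := fun a => ∀ b ∈ indComp comp N D, a * b ∈ indComp comp N (C * D)) _ ha' ?_ ?_ ?_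
  · rintro ⟨g, hg⟩ x hx b hb
    have hb' : b ∈ ⨆ h : {h : G // (h : G ⧸ N) = D}, comp h.1 := hb
    refine AddSubgroup.iSup_induction
      (C := fun b => x * b ∈ indComp comp N (C * D)) _ hb' ?_ ?_ ?_
    · rintro ⟨h, hh⟩ y hy
      have hmk : ((g * h : G) : G ⧸ N) = C * D := by rw [QuotientGroup.mk_mul, hg, hh]
      exact le_iSup (fun p : {p : G // (p : G ⧸ N) = C * D} => comp p.1) ⟨g * h, hmk⟩
        (hgr g h x hx y hy)
    · simpa using zero_mem _
    · intro y z hy hz; simpa [mul_add] using add_mem hy hz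
  · intro b _; simpa using zero_mem _
  · intro a1 a2 h1 h2 b hb; simpa [add_mul] using add_mem (h1 b hb) (h2 b hb)

/-- Let `S` be essentially epsilon-strongly `G`-graded with `E_g` a set of local units for
`S_g S_{g⁻¹}`, let `N ◃ G` and fix a coset `C`. If for all `g, h ∈ C` the elements of `E_g`
and `E_h` commute (so that all joins `e ∨ f = e + f - ef` exist in the idempotent order),
then the join-closure `E_C` of `⋃_{g ∈ C} E_g` is a set of local units for `S_C S_{C⁻¹}`. -/
theorem stmt13 {G : Type*} [Group G] [DecidableEq G] {S : Type*} [NonUnitalRing S]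
    (comp : G → AddSubgroup S) (hgr : IsGrading comp)
    (hsym : ∀ g : G, mulSub (mulSub (comp g) (comp g⁻¹)) (comp g) = comp g)
    (E : G → Set S)
    (hE : ∀ g : G, IsLocalUnitsFor (mulSub (comp g) (comp g⁻¹)) (E g))
    (N : Subgroup G) [N.Normal] (C : G ⧸ N)
    (hjoin : ∀ g h : G, (g : G ⧸ N) = C → (h : G ⧸ N) = C →
      ∀ e ∈ E g, ∀ f ∈ E h, e * f = f * e) :
    IsLocalUnitsFor (mulSub (indComp comp N C) (indComp comp N C⁻¹))
      {x | JoinClosure (⋃ g ∈ {g : G | (g : G ⧸ N) = C}, E g) x} := by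
  obtain ⟨hdir, hmul⟩ := hgr
  set A : Set S := ⋃ g ∈ {g : G | (g : G ⧸ N) = C}, E g with hAdef
  have hmemA : ∀ {g : G}, (g : G ⧸ N) = C → ∀ {e : S}, e ∈ E g → e ∈ A := by
    intro g hg e he
    exact Set.mem_biUnion hg he
  have hAmem : ∀ x ∈ A, ∃ g : G, (g : G ⧸ N) = C ∧ x ∈ E g := by
    intro x hx
    simpa [hAdef] using hx
  have hcommA : ∀ x ∈ A, ∀ y ∈ A, x * y = y * x := by
    intro x hx y hy
    obtain ⟨g, hg, hxg⟩ := hAmem x hx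
    obtain ⟨h, hh, hyh⟩ := hAmem y hy
    exact hjoin g h hg hh x hxg y hyh
  have hcomm := JoinClosure.comm hcommA
  have hgA : ∀ g : G, (g : G ⧸ N) = C → comp g ≤ indComp comp N C := fun g hg =>
    le_iSup (fun p : {p : G // (p : G ⧸ N) = C} => comp p.1) ⟨g, hg⟩
  have hgB : ∀ g : G, (g : G ⧸ N) = C → comp g⁻¹ ≤ indComp comp N C⁻¹ := fun g hg =>
    le_iSup (fun p : {p : G // (p : G ⧸ N) = C⁻¹} => comp p.1)
      ⟨g⁻¹, by rw [QuotientGroup.mk_inv, hg]⟩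
  have hEleT : ∀ g : G, (g : G ⧸ N) = C → ∀ e ∈ E g,
      e ∈ mulSub (indComp comp N C) (indComp comp N C⁻¹) := by
    intro g hg e he
    exact mulSub_le (fun u hu v hv => mul_mem_mulSub (hgA g hg hu) (hgB g hg hv))
      ((hE g).1 e he)
  have step1 : ∀ x ∈ mulSub (indComp comp N C) (indComp comp N C⁻¹),
      ∀ w ∈ indComp comp N C, x * w ∈ indComp comp N C := by
    intro x hx
    refine mulSub_induction (P := fun x => ∀ w ∈ indComp comp N C, x * w ∈ indComp comp N C)
      hx ?_ ?_ ?_ ?_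
    · intro u hu v hv w hw
      have h1 : v * w ∈ indComp comp N (C⁻¹ * C) := indComp_mul comp hmul N _ _ v hv w hw
      have h2 : u * (v * w) ∈ indComp comp N (C * (C⁻¹ * C)) :=
        indComp_mul comp hmul N _ _ u hu _ h1
      rw [mul_assoc]
      simpa [mul_inv_cancel_left] using h2
    · intro w _; simpa using zero_mem _
    · intro a b ha hb w hw; simpa [add_mul] using add_mem (ha w hw) (hb w hw)
    · intro a ha w hw; simpa [neg_mul] using neg_mem (ha w hw)
  have hTmul : ∀ x ∈ mulSub (indComp comp N C) (indComp comp N C⁻¹),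
      ∀ y ∈ mulSub (indComp comp N C) (indComp comp N C⁻¹),
      x * y ∈ mulSub (indComp comp N C) (indComp comp N C⁻¹) := by
    intro x hx y hy
    refine mulSub_induction
      (P := fun y => x * y ∈ mulSub (indComp comp N C) (indComp comp N C⁻¹)) hy ?_ ?_ ?_ ?_
    · intro u hu v hv
      rw [← mul_assoc]
      exact mul_mem_mulSub (step1 x hx u hu) hv
    · simpa using zero_mem _
    · intro a b ha hb; simpa [mul_add] using add_mem ha hb
    · intro a ha; simpa [mul_neg] using neg_mem ha
  have hLeft : ∀ g : G, (g : G ⧸ N) = C → ∀ s ∈ comp g, ∃ f ∈ E g, f * s = s := by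
    intro g hg s hs
    obtain ⟨hEsub, hEid, hEcomm, hEjoin, hEunit⟩ := hE g
    rw [← hsym g] at hs
    refine mulSub_induction (P := fun s => ∃ f ∈ E g, f * s = s) hs ?_ ?_ ?_ ?_
    · intro w hw t _
      obtain ⟨f, hf, hfw, _⟩ := hEunit w hw
      exact ⟨f, hf, by rw [← mul_assoc, hfw]⟩
    · obtain ⟨f, hf, _⟩ := hEunit 0 (zero_mem _)
      exact ⟨f, hf, mul_zero f⟩
    · rintro a b ⟨f1, hf1, h1⟩ ⟨f2, hf2, h2⟩
      refine ⟨f1 + f2 - f1 * f2, hEjoin _ hf1 _ hf2, ?_⟩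
      rw [mul_add, join_mul_left' (hEcomm _ hf1 _ hf2) h1, join_mul_left h2]
    · rintro a ⟨f, hf, h⟩
      exact ⟨f, hf, by rw [mul_neg, h]⟩
  have hRight : ∀ g : G, (g : G ⧸ N) = C → ∀ t ∈ comp g⁻¹, ∃ f ∈ E g, t * f = t := by
    intro g hg t ht
    obtain ⟨hEsub, hEid, hEcomm, hEjoin, hEunit⟩ := hE g
    have key : comp g⁻¹ = mulSub (comp g⁻¹) (mulSub (comp g) (comp g⁻¹)) := by
      conv_lhs => rw [← hsym g⁻¹]
      rw [inv_inv, mulSub_assoc]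
    rw [key] at ht
    refine mulSub_induction (P := fun t => ∃ f ∈ E g, t * f = t) ht ?_ ?_ ?_ ?_
    · intro t' _ w hw
      obtain ⟨f, hf, _, hwf⟩ := hEunit w hw
      exact ⟨f, hf, by rw [mul_assoc, hwf]⟩
    · obtain ⟨f, hf, _⟩ := hEunit 0 (zero_mem _)
      exact ⟨f, hf, zero_mul f⟩
    · rintro a b ⟨f1, hf1, h1⟩ ⟨f2, hf2, h2⟩
      refine ⟨f1 + f2 - f1 * f2, hEjoin _ hf1 _ hf2, ?_⟩
      rw [add_mul, join_mul_right h1, join_mul_right' (hEcomm _ hf1 _ hf2) h2]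
    · rintro a ⟨f, hf, h⟩
      exact ⟨f, hf, by rw [neg_mul, h]⟩
  have nonemptyA : ∃ f0, f0 ∈ A := by
    obtain ⟨g0, hg0⟩ := QuotientGroup.mk_surjective (s := N) C
    obtain ⟨f, hf, _⟩ := (hE g0).2.2.2.2 0 (zero_mem _)
    exact ⟨f, hmemA hg0 hf⟩
  have hQleft : ∀ u ∈ indComp comp N C, ∃ f, JoinClosure A f ∧ f * u = u := by
    intro u hu
    have hu' : u ∈ ⨆ g : {g : G // (g : G ⧸ N) = C}, comp g.1 := hu
    refine AddSubgroup.iSup_induction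
      (C := fun u => ∃ f, JoinClosure A f ∧ f * u = u) _ hu' ?_ ?_ ?_
    · rintro ⟨g, hg⟩ x hx
      obtain ⟨f, hf, hfx⟩ := hLeft g hg x hx
      exact ⟨f, JoinClosure.base (hmemA hg hf), hfx⟩
    · obtain ⟨f0, hf0⟩ := nonemptyA
      exact ⟨f0, JoinClosure.base hf0, mul_zero _⟩
    · rintro a b ⟨f1, hf1, h1⟩ ⟨f2, hf2, h2⟩
      refine ⟨f1 + f2 - f1 * f2, JoinClosure.join hf1 hf2, ?_⟩
      rw [mul_add, join_mul_left' (hcomm _ hf1 _ hf2) h1, join_mul_left h2]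
  have hQright : ∀ v ∈ indComp comp N C⁻¹, ∃ f, JoinClosure A f ∧ v * f = v := by
    intro v hv
    have hv' : v ∈ ⨆ k : {k : G // (k : G ⧸ N) = C⁻¹}, comp k.1 := hv
    refine AddSubgroup.iSup_induction
      (C := fun v => ∃ f, JoinClosure A f ∧ v * f = v) _ hv' ?_ ?_ ?_
    · rintro ⟨k, hk⟩ x hx
      have hk' : ((k⁻¹ : G) : G ⧸ N) = C := by rw [QuotientGroup.mk_inv, hk, inv_inv]
      have hx' : x ∈ comp (k⁻¹)⁻¹ := by rwa [inv_inv]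
      obtain ⟨f, hf, hfx⟩ := hRight k⁻¹ hk' x hx'
      exact ⟨f, JoinClosure.base (hmemA hk' hf), hfx⟩
    · obtain ⟨f0, hf0⟩ := nonemptyA
      exact ⟨f0, JoinClosure.base hf0, zero_mul _⟩
    · rintro a b ⟨f1, hf1, h1⟩ ⟨f2, hf2, h2⟩
      refine ⟨f1 + f2 - f1 * f2, JoinClosure.join hf1 hf2, ?_⟩
      rw [add_mul, join_mul_right h1, join_mul_right' (hcomm _ hf1 _ hf2) h2]
  refine ⟨?_, ?_, ?_, ?_, ?_⟩
  · intro e he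
    induction he with
    | base h =>
      obtain ⟨g, hg, hEg⟩ := hAmem _ h
      exact hEleT g hg _ hEg
    | join hx hy ihx ihy => exact sub_mem (add_mem ihx ihy) (hTmul _ ihx _ ihy)
  · intro e he
    exact JoinClosure.idem hcommA
      (fun x hx => by obtain ⟨g, hg, h⟩ := hAmem x hx; exact (hE g).2.1 x h) e he
  · intro e he f hf
    exact hcomm e he f hf
  · intro e he f hf
    exact JoinClosure.join he hf
  · intro r hr
    refine mulSub_induction
      (P := fun r => ∃ f ∈ {x | JoinClosure A x}, f * r = r ∧ r * f = r) hr ?_ ?_ ?_ ?_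
    · intro u hu v hv
      obtain ⟨f, hf, hfu⟩ := hQleft u hu
      obtain ⟨f', hf', hvf'⟩ := hQright v hv
      refine ⟨f + f' - f * f', JoinClosure.join hf hf', ?_, ?_⟩
      · exact join_mul_left' (hcomm _ hf _ hf') (by rw [← mul_assoc, hfu])
      · exact join_mul_right' (hcomm _ hf _ hf') (by rw [mul_assoc, hvf'])
    · obtain ⟨f0, hf0⟩ := nonemptyA
      exact ⟨f0, JoinClosure.base hf0, mul_zero _, zero_mul _⟩
    · rintro a b ⟨f1, hf1, h1l, h1r⟩ ⟨f2, hf2, h2l, h2r⟩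
      refine ⟨f1 + f2 - f1 * f2, JoinClosure.join hf1 hf2, ?_, ?_⟩
      · rw [mul_add, join_mul_left' (hcomm _ hf1 _ hf2) h1l, join_mul_left h2l]
      · rw [add_mul, join_mul_right h1r, join_mul_right' (hcomm _ hf1 _ hf2) h2r]
    · rintro a ⟨f, hf, hl, hr'⟩
      exact ⟨f, hf, by rw [mul_neg, hl], by rw [neg_mul, hr']⟩
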